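/- Let D ⊆ ℂ be an open disc with centre c, f : D → ℂ holomorphic, and (c_n)_{n≥1} a sequence in D converging to c. Then for every z ∈ D, the Newton interpolation series ∑_{n≥0} Δⁿf(c₁,…,c_{n+1})·(z−c₁)⋯(z−c_n) converges absolutely to f(z), where Δⁿf(c₁,…,c_{n+1}) = (1/(2πi))∮_Γ f(ξ)/((ξ−c₁)⋯(ξ−c_{n+1})) dξ for any positively oriented circle Γ centered at c, contained in D, enclosing z and all the c_k. -/

import Mathlib

open Finset Metric Filter Topology

/-- Newton interpolation series: for `f` holomorphic on the open disc `D = ball c r`,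
nodes `c_n ∈ D` with `c_n → c`, and `z ∈ D`, for any positively oriented circle
`C(c, R)` contained in `D` enclosing `z` and all the nodes, the series
`∑_{n≥0} Δⁿf(c₁,…,c_{n+1})·(z−c₁)⋯(z−c_n)` converges absolutely to `f(z)`. -/
theorem stmt12 (c : ℂ) (r : ℝ) (hr : 0 < r) (f : ℂ → ℂ)
    (hf : DifferentiableOn ℂ f (ball c r))
    (cs : ℕ → ℂ) (hcs : ∀ n, cs n ∈ ball c r) (hlim : Tendsto cs atTop (𝓝 c))
    (z : ℂ) (hz : z ∈ ball c r)
    (R : ℝ) (hR0 : 0 < R) (hRr : R < r)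
    (hzR : z ∈ ball c R) (hcsR : ∀ n, cs n ∈ ball c R) :
    Summable (fun n : ℕ =>
        ‖((2 * Real.pi * Complex.I)⁻¹ •
            (∮ ξ in C(c, R), f ξ / ∏ i ∈ Finset.range (n + 1), (ξ - cs i)))
          * ∏ i ∈ Finset.range n, (z - cs i)‖) ∧
      ∑' n : ℕ,
          ((2 * Real.pi * Complex.I)⁻¹ •
              (∮ ξ in C(c, R), f ξ / ∏ i ∈ Finset.range (n + 1), (ξ - cs i)))
            * ∏ i ∈ Finset.range n, (z - cs i) = f z := by
  -- proof
  set P : ℕ → ℂ → ℂ := fun n ξ => ∏ i ∈ Finset.range n, (ξ - cs i) with hP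
  set a : ℕ → ℂ := fun n =>
    (2 * Real.pi * Complex.I)⁻¹ • (∮ ξ in C(c, R), f ξ / P (n + 1) ξ) with ha
  -- continuity of f near the circle
  have hsub : closedBall c R ⊆ ball c r := closedBall_subset_ball hRr
  have hfc : ContinuousOn f (closedBall c R) := hf.continuousOn.mono hsub
  have hfs : ContinuousOn f (sphere c R) := hfc.mono sphere_subset_closedBall
  -- sup bound on f
  obtain ⟨M, hM⟩ : ∃ M, ∀ ξ ∈ sphere c R, ‖f ξ‖ ≤ M := by
    obtain ⟨M, hM⟩ := (isCompact_sphere c R).exists_bound_of_continuousOn hfs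
    exact ⟨M, hM⟩
  have hsn : (c + R : ℂ) ∈ sphere c R := by
    simp [mem_sphere_iff_norm, abs_of_pos hR0]
  have hM0 : 0 ≤ M := le_trans (norm_nonneg _) (hM _ hsn)
  -- lower bounds for distances to nodes on the sphere
  set d : ℕ → ℝ := fun i => R - dist (cs i) c with hdd
  have hd0 : ∀ i, 0 < d i := fun i => sub_pos.2 (mem_ball.1 (hcsR i))
  have hdist : ∀ ξ ∈ sphere c R, ∀ i, d i ≤ ‖ξ - cs i‖ := by
    intro ξ hξ i
    have h1 : dist ξ c ≤ dist ξ (cs i) + dist (cs i) c := dist_triangle _ _ _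
    rw [mem_sphere] at hξ
    rw [hξ] at h1
    have h2 : R - dist (cs i) c ≤ dist ξ (cs i) := by linarith
    calc d i = R - dist (cs i) c := rfl
    _ ≤ dist ξ (cs i) := h2
    _ = ‖ξ - cs i‖ := dist_eq_norm _ _
  -- distance from sphere to z
  set ρ : ℝ := dist z c with hρdef
  have hρR : ρ < R := mem_ball.1 hzR
  have hρ0 : 0 ≤ ρ := dist_nonneg
  have hdistz : ∀ ξ ∈ sphere c R, R - ρ ≤ ‖ξ - z‖ := by
    intro ξ hξ
    rw [mem_sphere] at hξ
    have h1 : dist ξ c ≤ dist ξ z + dist z c := dist_triangle _ _ _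
    rw [hξ] at h1
    have h2 : R - ρ ≤ dist ξ z := by linarith
    calc R - ρ ≤ dist ξ z := h2
    _ = ‖ξ - z‖ := dist_eq_norm _ _
  have hzne : ∀ ξ ∈ sphere c R, ξ - z ≠ 0 := fun ξ hξ => by
    have := hdistz ξ hξ
    intro h; rw [h, norm_zero] at this; linarith
  -- norm of P n ξ from below
  have hPnorm : ∀ ξ ∈ sphere c R, ∀ n, (∏ i ∈ Finset.range n, d i) ≤ ‖P n ξ‖ := by
    intro ξ hξ n
    rw [hP]
    simp only [norm_prod]
    exact Finset.prod_le_prod (fun i _ => (hd0 i).le) (fun i _ => hdist ξ hξ i)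
  have hdprod : ∀ n, 0 < ∏ i ∈ Finset.range n, d i :=
    fun n => Finset.prod_pos fun i _ => hd0 i
  have hPne : ∀ ξ ∈ sphere c R, ∀ n, P n ξ ≠ 0 := by
    intro ξ hξ n h
    have := hPnorm ξ hξ n
    rw [h, norm_zero] at this
    exact absurd this (not_le.2 (hdprod n))
  -- continuity of P and of the integrands
  have hPc : ∀ n, Continuous (P n) := by
    intro n; rw [hP]
    exact continuous_finset_prod _ fun i _ => continuous_id.sub continuous_const
  have hInt : ∀ n, CircleIntegrable (fun ξ => f ξ / P n ξ) c R := by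
    intro n
    refine ContinuousOn.circleIntegrable hR0.le ?_
    exact hfs.div ((hPc n).continuousOn) (fun ξ hξ => hPne ξ hξ n)
  -- geometric ratio
  set ε : ℝ := (R - ρ) / 3 with hεdef
  have hε0 : 0 < ε := by rw [hεdef]; linarith
  have hRε : 0 < R - ε := by rw [hεdef]; linarith
  set q : ℝ := (ρ + ε) / (R - ε) with hqdef
  have hq0 : 0 < q := div_pos (by linarith) hRε
  have hq1 : q < 1 := (div_lt_one hRε).2 (by rw [hεdef]; linarith)
  obtain ⟨N0, hN0⟩ : ∃ N0, ∀ i ≥ N0, dist (cs i) c < ε :=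
    Metric.tendsto_atTop.1 hlim ε hε0
  set u : ℕ → ℝ := fun i => ‖z - cs i‖ / d i with hu
  have hu0 : ∀ i, 0 ≤ u i := fun i => div_nonneg (norm_nonneg _) (hd0 i).le
  have huq : ∀ i ≥ N0, u i ≤ q := by
    intro i hi
    have h1 : dist (cs i) c < ε := hN0 i hi
    have h2 : ‖z - cs i‖ ≤ ρ + ε := by
      have h5 : dist z (cs i) ≤ dist z c + dist c (cs i) := dist_triangle _ _ _
      have h6 : dist c (cs i) < ε := by rwa [dist_comm]
      rw [← dist_eq_norm]
      have : ρ = dist z c := rfl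
      linarith
    have h4 : R - ε ≤ d i := by
      have h7 : d i = R - dist (cs i) c := rfl
      linarith
    exact div_le_div₀ (by linarith) h2 hRε h4
  set B : ℝ := (∏ i ∈ Finset.range N0, u i) / q ^ N0 with hB
  have hB0 : 0 ≤ B := div_nonneg (Finset.prod_nonneg fun i _ => hu0 i) (pow_nonneg hq0.le _)
  have key : ∀ N, N0 ≤ N → ∏ i ∈ Finset.range N, u i ≤ B * q ^ N := by
    intro N hN
    obtain ⟨n, rfl⟩ := Nat.exists_eq_add_of_le hN
    rw [Finset.prod_range_add]
    have h1 : ∏ i ∈ Finset.range n, u (N0 + i) ≤ q ^ n := by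
      calc ∏ i ∈ Finset.range n, u (N0 + i) ≤ ∏ _i ∈ Finset.range n, q :=
        Finset.prod_le_prod (fun i _ => hu0 _) (fun i _ => huq _ (Nat.le_add_right _ _))
      _ = q ^ n := by simp
    calc (∏ i ∈ Finset.range N0, u i) * ∏ i ∈ Finset.range n, u (N0 + i)
        ≤ (∏ i ∈ Finset.range N0, u i) * q ^ n :=
          mul_le_mul_of_nonneg_left h1 (Finset.prod_nonneg fun i _ => hu0 i)
      _ = B * q ^ (N0 + n) := by
          rw [hB, pow_add]
          field_simp
  -- norm of the coefficients
  have hπ := Real.pi_pos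
  have h2pin : ‖((2 * Real.pi * Complex.I))⁻¹‖ = (2 * Real.pi)⁻¹ := by
    rw [norm_inv, norm_mul, norm_mul, Complex.norm_I]
    simp [abs_of_pos Real.pi_pos]
  have hanorm : ∀ n, ‖a n‖ ≤ R * M / ∏ i ∈ Finset.range (n + 1), d i := by
    intro n
    have hIb : ‖∮ ξ in C(c, R), f ξ / P (n + 1) ξ‖
        ≤ 2 * Real.pi * R * (M / ∏ i ∈ Finset.range (n + 1), d i) := by
      have h := circleIntegral.norm_integral_le_of_norm_le_const (c := c)
        (f := fun ξ => f ξ / P (n + 1) ξ)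
        (C := M / ∏ i ∈ Finset.range (n + 1), d i) hR0.le ?_
      · simpa [abs_of_pos hR0] using h
      · intro ξ hξ
        rw [norm_div]
        exact div_le_div₀ hM0 (hM ξ hξ) (hdprod (n + 1)) (hPnorm ξ hξ (n + 1))
    rw [ha]
    simp only []
    rw [norm_smul, h2pin]
    calc (2 * Real.pi)⁻¹ * ‖∮ ξ in C(c, R), f ξ / P (n + 1) ξ‖
        ≤ (2 * Real.pi)⁻¹ * (2 * Real.pi * R * (M / ∏ i ∈ Finset.range (n + 1), d i)) :=
          mul_le_mul_of_nonneg_left hIb (by positivity)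
      _ = (2 * Real.pi)⁻¹ * (2 * Real.pi) * (R * M / ∏ i ∈ Finset.range (n + 1), d i) := by
          ring
      _ = R * M / ∏ i ∈ Finset.range (n + 1), d i := by
          rw [inv_mul_cancel₀ (by positivity), one_mul]
  have hterm : ∀ n, N0 ≤ n → ‖a n * P n z‖ ≤ R * M * B / (R - ε) * q ^ n := by
    intro n hn
    have h1 : ‖P n z‖ = ∏ i ∈ Finset.range n, ‖z - cs i‖ := by
      rw [hP]; exact norm_prod _ _
    have h2 : ‖a n * P n z‖ ≤ (R * M / ∏ i ∈ Finset.range (n + 1), d i) *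
        ∏ i ∈ Finset.range n, ‖z - cs i‖ := by
      rw [norm_mul, h1]
      exact mul_le_mul_of_nonneg_right (hanorm n)
        (Finset.prod_nonneg fun _ _ => norm_nonneg _)
    have h3 : (R * M / ∏ i ∈ Finset.range (n + 1), d i) * ∏ i ∈ Finset.range n, ‖z - cs i‖
        = R * M * (∏ i ∈ Finset.range n, u i) / d n := by
      rw [hu]
      rw [Finset.prod_range_succ, Finset.prod_div_distrib]
      field_simp [(hdprod n).ne', (hd0 n).ne']
    have h4 : R * M * (∏ i ∈ Finset.range n, u i) / d n
        ≤ R * M * (B * q ^ n) / (R - ε) := by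
      refine div_le_div₀ ?_ ?_ hRε ?_
      · exact mul_nonneg (mul_nonneg hR0.le hM0)
          (mul_nonneg hB0 (pow_nonneg hq0.le n))
      · exact mul_le_mul_of_nonneg_left (key n hn) (mul_nonneg hR0.le hM0)
      · have h7 : d n = R - dist (cs n) c := rfl
        have := hN0 n hn
        linarith
    calc ‖a n * P n z‖ ≤ _ := h2
      _ = _ := h3
      _ ≤ _ := h4
      _ = R * M * B / (R - ε) * q ^ n := by ring
  have hsum : Summable fun n => ‖a n * P n z‖ := by
    apply Summable.of_norm_bounded_eventually_nat
      ((summable_geometric_of_lt_one hq0.le hq1).mul_left (R * M * B / (R - ε)))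
    filter_upwards [eventually_ge_atTop N0] with n hn
    rw [norm_norm]
    exact hterm n hn
  -- remainder terms
  set g : ℕ → ℂ → ℂ := fun n ξ => f ξ / (P n ξ * (ξ - z)) * P n z with hg
  set Rem : ℕ → ℂ := fun n =>
    (2 * Real.pi * Complex.I)⁻¹ • (∮ ξ in C(c, R), g n ξ) with hRem
  have hcne : ∀ ξ ∈ sphere c R, ∀ i, ξ - cs i ≠ 0 := by
    intro ξ hξ i h
    have := hdist ξ hξ i
    rw [h, norm_zero] at this
    exact absurd this (not_le.2 (hd0 i))
  have hgInt : ∀ n, CircleIntegrable (g n) c R := by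
    intro n
    refine ContinuousOn.circleIntegrable hR0.le ?_
    refine ContinuousOn.mul ?_ continuousOn_const
    exact hfs.div (((hPc n).mul (continuous_id.sub continuous_const)).continuousOn)
      (fun ξ hξ => mul_ne_zero (hPne ξ hξ n) (hzne ξ hξ))
  have hgInt2 : ∀ n, CircleIntegrable (fun ξ => f ξ / P (n + 1) ξ * P n z) c R := by
    intro n
    refine ContinuousOn.circleIntegrable hR0.le ?_
    exact (hfs.div ((hPc (n + 1)).continuousOn) (fun ξ hξ => hPne ξ hξ (n + 1))).mul
      continuousOn_const
  have hstep : ∀ N, Set.EqOn (g N)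
      (fun ξ => f ξ / P (N + 1) ξ * P N z + g (N + 1) ξ) (sphere c R) := by
    intro N ξ hξ
    have e1 : P (N + 1) ξ = P N ξ * (ξ - cs N) := by
      rw [hP]; exact Finset.prod_range_succ _ _
    have e2 : P (N + 1) z = P N z * (z - cs N) := by
      rw [hP]; exact Finset.prod_range_succ _ _
    have n1 : P N ξ ≠ 0 := hPne ξ hξ N
    have n2 : ξ - cs N ≠ 0 := hcne ξ hξ N
    have n3 : ξ - z ≠ 0 := hzne ξ hξ
    simp only [hg, e1, e2]
    field_simp
    ring
  have hRemstep : ∀ N, Rem N = a N * P N z + Rem (N + 1) := by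
    intro N
    have h2 : (∮ ξ in C(c, R), g (N + 1) ξ)
        = (∮ ξ in C(c, R), g N ξ) - ∮ ξ in C(c, R), f ξ / P (N + 1) ξ * P N z := by
      rw [← circleIntegral.integral_sub (hgInt N) (hgInt2 N)]
      apply circleIntegral.integral_congr hR0.le
      intro ξ hξ
      have h6 := hstep N hξ
      simp only [] at h6 ⊢
      rw [h6]; ring
    have h3 : (∮ ξ in C(c, R), f ξ / P (N + 1) ξ * P N z)
        = (∮ ξ in C(c, R), f ξ / P (N + 1) ξ) * P N z := by
      have h4 := circleIntegral.integral_smul_const (fun ξ => f ξ / P (N + 1) ξ) (P N z) c R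
      simpa [smul_eq_mul] using h4
    have h5 : Rem (N + 1) = Rem N - a N * P N z := by
      rw [hRem]
      simp only []
      rw [h2, h3, smul_sub, smul_mul_assoc]
    rw [h5]; ring
  have h2πI : (2 * (Real.pi : ℂ) * Complex.I) ≠ 0 := by
    simp [Real.pi_ne_zero, Complex.I_ne_zero]
  have hRem0 : Rem 0 = f z := by
    have e : Set.EqOn (g 0) (fun ξ => (ξ - z)⁻¹ • f ξ) (sphere c R) := by
      intro ξ hξ
      simp only [hg, hP, Finset.range_zero, Finset.prod_empty, one_mul, mul_one,
        smul_eq_mul]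
      rw [div_eq_mul_inv, mul_comm]
    have hD : DiffContOnCl ℂ f (ball c R) := by
      apply DifferentiableOn.diffContOnCl
      rw [closure_ball c hR0.ne']
      exact hf.mono hsub
    rw [hRem]
    simp only []
    rw [circleIntegral.integral_congr hR0.le e, hD.circleIntegral_sub_inv_smul hzR,
      inv_smul_smul₀ h2πI]
  have hpartial : ∀ N, ∑ n ∈ Finset.range N, a n * P n z = f z - Rem N := by
    intro N
    induction N with
    | zero => simp [hRem0]
    | succ N ih =>
      rw [Finset.sum_range_succ, ih, hRemstep N]
      ring
  -- remainder bound
  have hRρ : 0 < R - ρ := by linarith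
  have hRembound : ∀ N, N0 ≤ N → ‖Rem N‖ ≤ R * M * B / (R - ρ) * q ^ N := by
    intro N hN
    have hIb : ‖∮ ξ in C(c, R), g N ξ‖
        ≤ 2 * Real.pi * R *
          (M * (∏ i ∈ Finset.range N, ‖z - cs i‖) / ((∏ i ∈ Finset.range N, d i) * (R - ρ))) := by
      have h := circleIntegral.norm_integral_le_of_norm_le_const (c := c) (f := g N)
        (C := M * (∏ i ∈ Finset.range N, ‖z - cs i‖) /
          ((∏ i ∈ Finset.range N, d i) * (R - ρ))) hR0.le ?_
      · simpa [abs_of_pos hR0] using h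
      · intro ξ hξ
        have hZ : ‖P N z‖ = ∏ i ∈ Finset.range N, ‖z - cs i‖ := by
          rw [hP]; exact norm_prod _ _
        show ‖f ξ / (P N ξ * (ξ - z)) * P N z‖ ≤ _
        rw [norm_mul, norm_div, norm_mul, hZ,
          show (M * ∏ i ∈ Finset.range N, ‖z - cs i‖) /
              ((∏ i ∈ Finset.range N, d i) * (R - ρ))
            = (M / ((∏ i ∈ Finset.range N, d i) * (R - ρ))) *
              ∏ i ∈ Finset.range N, ‖z - cs i‖ from by ring]
        refine mul_le_mul_of_nonneg_right ?_
          (Finset.prod_nonneg fun i _ => norm_nonneg (z - cs i))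
        refine div_le_div₀ hM0 (hM ξ hξ) (mul_pos (hdprod N) hRρ) ?_
        exact mul_le_mul (hPnorm ξ hξ N) (hdistz ξ hξ) hRρ.le (norm_nonneg _)
    have h1 : ‖Rem N‖ ≤ (2 * Real.pi)⁻¹ * ‖∮ ξ in C(c, R), g N ξ‖ := by
      rw [hRem]
      simp only []
      rw [norm_smul, h2pin]
    have h2 : (2 * Real.pi)⁻¹ * (2 * Real.pi * R *
          (M * (∏ i ∈ Finset.range N, ‖z - cs i‖) / ((∏ i ∈ Finset.range N, d i) * (R - ρ))))
        = R * M * (∏ i ∈ Finset.range N, u i) / (R - ρ) := by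
      have hzz : (∏ i ∈ Finset.range N, u i)
          = (∏ i ∈ Finset.range N, ‖z - cs i‖) / ∏ i ∈ Finset.range N, d i := by
        rw [hu, Finset.prod_div_distrib]
      rw [hzz]
      rw [show (2 * Real.pi)⁻¹ * (2 * Real.pi * R *
          (M * (∏ i ∈ Finset.range N, ‖z - cs i‖) / ((∏ i ∈ Finset.range N, d i) * (R - ρ))))
        = (2 * Real.pi)⁻¹ * (2 * Real.pi) *
          (R * (M * (∏ i ∈ Finset.range N, ‖z - cs i‖) /
            ((∏ i ∈ Finset.range N, d i) * (R - ρ)))) from by ring]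
      rw [inv_mul_cancel₀ (by positivity), one_mul]
      field_simp [(hdprod N).ne', hRρ.ne']
    have h3 : R * M * (∏ i ∈ Finset.range N, u i) / (R - ρ)
        ≤ R * M * (B * q ^ N) / (R - ρ) := by
      refine div_le_div₀ ?_ ?_ hRρ le_rfl
      · exact mul_nonneg (mul_nonneg hR0.le hM0)
          (mul_nonneg hB0 (pow_nonneg hq0.le N))
      · exact mul_le_mul_of_nonneg_left (key N hN) (mul_nonneg hR0.le hM0)
    calc ‖Rem N‖ ≤ (2 * Real.pi)⁻¹ * ‖∮ ξ in C(c, R), g N ξ‖ := h1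
      _ ≤ (2 * Real.pi)⁻¹ * (2 * Real.pi * R *
          (M * (∏ i ∈ Finset.range N, ‖z - cs i‖) /
            ((∏ i ∈ Finset.range N, d i) * (R - ρ)))) :=
        mul_le_mul_of_nonneg_left hIb (by positivity)
      _ = R * M * (∏ i ∈ Finset.range N, u i) / (R - ρ) := h2
      _ ≤ R * M * (B * q ^ N) / (R - ρ) := h3
      _ = R * M * B / (R - ρ) * q ^ N := by ring
  have hRemlim : Tendsto Rem atTop (𝓝 0) := by
    refine squeeze_zero_norm' (a := fun N => R * M * B / (R - ρ) * q ^ N) ?_ ?_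
    · filter_upwards [eventually_ge_atTop N0] with N hN
      exact hRembound N hN
    · have h := (tendsto_pow_atTop_nhds_zero_of_lt_one hq0.le hq1).const_mul
        (R * M * B / (R - ρ))
      simpa using h
  have hsum' : Summable fun n => a n * P n z := by
    rw [← summable_norm_iff]
    exact hsum
  have hlim1 : Tendsto (fun N => ∑ n ∈ Finset.range N, a n * P n z) atTop
      (𝓝 (∑' n, a n * P n z)) := hsum'.hasSum.tendsto_sum_nat
  have hlim2 : Tendsto (fun N => ∑ n ∈ Finset.range N, a n * P n z) atTop (𝓝 (f z)) := by
    simp only [hpartial]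
    have h := hRemlim.const_sub (f z)
    simpa using h
  have htsum : ∑' n, a n * P n z = f z := tendsto_nhds_unique hlim1 hlim2
  exact ⟨hsum, htsum⟩
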